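/- For any differentiable model f_i : ℝ^m → ℝ, any differentiable loss l : ℝ → ℝ, any parameter w ∈ ℝ^m and noise values v_i satisfying y_i = f_i(w) + v_i, any step size η > 0, and every i ≥ 1, the SMD iterates satisfy the identity D_ψ(w, w_{i−1}) + η l(v_i) = D_ψ(w, w_i) + E_i(w_i, w_{i−1}) + η D_{L_i}(w, w_{i−1}), where E_i(w_i, w_{i−1}) := D_ψ(w_i, w_{i−1}) − η D_{L_i}(w_i, w_{i−1}) + η L_i(w_i). -/
import Mathlib


open scoped RealInnerProductSpace

/-- Bregman-divergence-like quantity `D_g(u, u') = g(u) - g(u') - ∇g(u')ᵀ(u - u')` of a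
(not necessarily convex) function `g`. -/
noncomputable def Dbreg {m : ℕ} (g : EuclideanSpace ℝ (Fin m) → ℝ)
    (u u' : EuclideanSpace ℝ (Fin m)) : ℝ :=
  g u - g u' - ⟪gradient g u', u - u'⟫

/-- Lemma 3, fundamental per-step identity for SMD with a general model,
general loss and general strictly convex potential. Data points are indexed `1, 2, …`;
`L i` is the instantaneous loss `L_i(w) = l(y_i - f_i(w))` and the SMD iterates satisfy
`∇ψ(w_i) = ∇ψ(w_{i-1}) - η ∇L_i(w_{i-1})`. -/
theorem stmt_7 {m : ℕ} (y : ℕ → ℝ)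
    (f : ℕ → EuclideanSpace ℝ (Fin m) → ℝ) (hf : ∀ i, Differentiable ℝ (f i))
    (l : ℝ → ℝ) (hl : Differentiable ℝ l)
    (ψ : EuclideanSpace ℝ (Fin m) → ℝ) (hψ : Differentiable ℝ ψ)
    (hψconv : StrictConvexOn ℝ Set.univ ψ)
    (L : ℕ → EuclideanSpace ℝ (Fin m) → ℝ)
    (hLdef : ∀ i u, L i u = l (y i - f i u))
    (η : ℝ) (hη : 0 < η)
    (w : ℕ → EuclideanSpace ℝ (Fin m))
    (hupd : ∀ i : ℕ,
      gradient ψ (w (i + 1)) = gradient ψ (w i) - η • gradient (L (i + 1)) (w i))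
    (wstar : EuclideanSpace ℝ (Fin m)) (v : ℕ → ℝ)
    (hdata : ∀ i : ℕ, y (i + 1) = f (i + 1) wstar + v (i + 1)) :
    ∀ i : ℕ,
      Dbreg ψ wstar (w i) + η * l (v (i + 1)) =
        Dbreg ψ wstar (w (i + 1))
          + (Dbreg ψ (w (i + 1)) (w i) - η * Dbreg (L (i + 1)) (w (i + 1)) (w i)
              + η * L (i + 1) (w (i + 1)))
          + η * Dbreg (L (i + 1)) wstar (w i) := by
  intro i
  have hv : l (v (i + 1)) = L (i + 1) wstar := by
    rw [hLdef, hdata]; ring_nf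
  simp only [Dbreg, hupd i, hv, inner_sub_left, real_inner_smul_left, inner_sub_right]
  ring
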